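/- arXiv:math/9911041 — 2 statements merged into one kernel-verified Lean document; each statement's English description precedes it below -/
import Mathlib

section
/- Let $\{\beta_1,\ldots,\beta_l\}$ be an orthonormal basis of $\mathbb{R}^l$ (or $\mathbb{Z}^l$ with the standard inner product), set $\alpha_i := \beta_i - \beta_{i+1}$ for $1 \le i \le l$ with the convention $\beta_{l+1} = 0$, and define the group homomorphism $\eta : \bigoplus_i \mathbb{Z}\alpha_i \to \mathbb{Z}^l/2\mathbb{Z}^l$ by $\eta(\sum_i n_i \alpha_i) := \sum_i n_i \beta_{i+1} \bmod 2$. For $\nu \in \bigoplus_i \mathbb{Z}\alpha_i$ set $|\nu| := (\nu, \beta_1+\cdots+\beta_l) \bmod 2$. Then for all $\nu, \nu'$ in the lattice $\bigoplus_i \mathbb{Z}\alpha_i$, one has $(\nu, \eta(\nu')) + (\eta(\nu), \nu') + (\nu, \nu') \equiv |\nu|\,|\nu'| \pmod 2$. -/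
/-- Standard inner product on `ℤ^l`. -/
def ip {l : ℕ} (x y : Fin l → ℤ) : ℤ := ∑ j, x j * y j

/-- `β i` : standard basis vector. -/
def beta {l : ℕ} (i : Fin l) : Fin l → ℤ := fun j => if j = i then 1 else 0

/-- `β_{i+1}` with the convention `β_{l+1} = 0`. -/
def betaSucc {l : ℕ} (i : Fin l) : Fin l → ℤ :=
  fun j => if (j : ℕ) = (i : ℕ) + 1 then 1 else 0

/-- `α i = β i - β_{i+1}`. -/
def alphaRoot {l : ℕ} (i : Fin l) : Fin l → ℤ := beta i - betaSucc i

/-- For `ν = ∑ n i • α i`, `η(ν) = ∑ n i • β_{i+1}` (taken mod 2). -/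
def etaMap {l : ℕ} (n : Fin l → ℤ) : Fin l → ℤ := ∑ i, n i • betaSucc i

lemma etaMap_apply {l : ℕ} (n : Fin l → ℤ) (j : Fin l) :
    etaMap n j = ∑ i, n i * betaSucc i j := by
  simp [etaMap, Finset.sum_apply]

lemma nu_apply {l : ℕ} (n : Fin l → ℤ) (j : Fin l) :
    (∑ i, n i • alphaRoot i) j = n j - etaMap n j := by
  simp only [alphaRoot, Finset.sum_apply, Pi.smul_apply, Pi.sub_apply, smul_eq_mul,
    mul_sub, Finset.sum_sub_distrib, etaMap_apply]
  congr 1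
  simp [beta, mul_ite]

lemma etaMap_succ {k : ℕ} (n : Fin (k+1) → ℤ) (j : Fin k) :
    etaMap n j.succ = n j.castSucc := by
  rw [etaMap_apply]
  have : ∀ i : Fin (k+1), betaSucc i j.succ = if i = j.castSucc then 1 else 0 := by
    intro i
    simp only [betaSucc, Fin.val_succ, Fin.coe_castSucc]
    congr 1
    simp [Fin.ext_iff]
    omega
  simp [this, mul_ite]

lemma etaMap_zero {k : ℕ} (n : Fin (k+1) → ℤ) :
    etaMap n 0 = 0 := by
  rw [etaMap_apply]
  simp [betaSucc]

lemma key (l : ℕ) (n n' : Fin l → ℤ) :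
    (ip (∑ i, n i • alphaRoot i) (etaMap n')
      + ip (etaMap n) (∑ i, n' i • alphaRoot i)
      + ip (∑ i, n i • alphaRoot i) (∑ i, n' i • alphaRoot i))
    = (∑ j, (∑ i, n i • alphaRoot i) j) * (∑ j, (∑ i, n' i • alphaRoot i) j) := by
  have h1 : (ip (∑ i, n i • alphaRoot i) (etaMap n')
      + ip (etaMap n) (∑ i, n' i • alphaRoot i)
      + ip (∑ i, n i • alphaRoot i) (∑ i, n' i • alphaRoot i))
      = ∑ j, (n j * n' j - etaMap n j * etaMap n' j) := by
    simp only [ip, nu_apply, ← Finset.sum_add_distrib]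
    apply Finset.sum_congr rfl
    intro j _
    ring
  have h2 : (∑ j, (∑ i, n i • alphaRoot i) j) * (∑ j, (∑ i, n' i • alphaRoot i) j)
      = (∑ j, (n j - etaMap n j)) * (∑ j, (n' j - etaMap n' j)) := by
    simp only [nu_apply]
  rw [h1, h2]
  cases l with
  | zero => simp
  | succ k =>
    have e2 : ∀ f : Fin (k+1) → ℤ, (∑ j, (f j - etaMap f j)) = f (Fin.last k) := by
      intro f
      rw [Finset.sum_sub_distrib, Fin.sum_univ_succ (f := fun j => etaMap f j),
        Fin.sum_univ_castSucc (f := f)]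
      simp [etaMap_zero, etaMap_succ]
    have e1 : (∑ j, (n j * n' j - etaMap n j * etaMap n' j))
        = n (Fin.last k) * n' (Fin.last k) := by
      rw [Finset.sum_sub_distrib, Fin.sum_univ_succ (f := fun j => etaMap n j * etaMap n' j),
        Fin.sum_univ_castSucc (f := fun j => n j * n' j)]
      simp [etaMap_zero, etaMap_succ]
    rw [e1, e2 n, e2 n']

theorem stmt0 (l : ℕ) (n n' : Fin l → ℤ) :
    (ip (∑ i, n i • alphaRoot i) (etaMap n')
      + ip (etaMap n) (∑ i, n' i • alphaRoot i)
      + ip (∑ i, n i • alphaRoot i) (∑ i, n' i • alphaRoot i))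
    ≡ (∑ j, (∑ i, n i • alphaRoot i) j) * (∑ j, (∑ i, n' i • alphaRoot i) j)
    [ZMOD 2] := by
  rw [key]
end

section
/- Let $R = \bigoplus_{i \in \mathbb{Z}_2} R_i$ be a $\mathbb{Z}_2$-graded ring which is a domain, and suppose $R_1 \neq 0$. Let $M = M_0 \oplus M_1$ be a $\mathbb{Z}_2$-graded faithful $R$-module with $R_i M_j \subseteq M_{i+j}$. If $f \in R$ is $\mathbb{Z}_2$-homogeneous and $f(M_i) = 0$ for some fixed $i \in \mathbb{Z}_2$, then $f = 0$. -/
/-- Let `R = R₀ ⊕ R₁` be a `ℤ/2`-graded domain with `R₁ ≠ 0`, and `M = M₀ ⊕ M₁` a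
`ℤ/2`-graded faithful `R`-module with `Rᵢ Mⱼ ⊆ M_{i+j}`.  If `f ∈ R` is homogeneous
and kills some graded component `Mᵢ`, then `f = 0`. -/
theorem stmt4 {R M : Type*} [Ring R] [IsDomain R] [AddCommGroup M] [Module R M]
    (ℛ : ZMod 2 → AddSubgroup R) (ℳ : ZMod 2 → AddSubgroup M)
    -- `R` is the sum of its graded pieces
    (hRsum : ∀ r : R, ∃ r₀ ∈ ℛ 0, ∃ r₁ ∈ ℛ 1, r = r₀ + r₁)
    -- the graded pieces of `R` intersect trivially
    (hRdisj : ∀ r : R, r ∈ ℛ 0 → r ∈ ℛ 1 → r = 0)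
    -- graded multiplication
    (hRmul : ∀ (i j : ZMod 2) (a b : R), a ∈ ℛ i → b ∈ ℛ j → a * b ∈ ℛ (i + j))
    -- the odd part of `R` is nonzero
    (hR1 : ∃ p ∈ ℛ 1, p ≠ 0)
    -- `M` is the sum of its graded pieces
    (hMsum : ∀ m : M, ∃ m₀ ∈ ℳ 0, ∃ m₁ ∈ ℳ 1, m = m₀ + m₁)
    -- graded action : `Rᵢ • Mⱼ ⊆ M_{i+j}`
    (hsmul : ∀ (i j : ZMod 2) (a : R) (m : M), a ∈ ℛ i → m ∈ ℳ j → a • m ∈ ℳ (i + j))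
    -- `M` is faithful
    (hfaith : ∀ r : R, (∀ m : M, r • m = 0) → r = 0)
    (f : R) (d : ZMod 2) (hf : f ∈ ℛ d)
    (i : ZMod 2) (hkill : ∀ m ∈ ℳ i, f • m = 0) :
    f = 0 := by
  obtain ⟨p, hp, hpne⟩ := hR1
  have hdd : d + d = 0 := by
    have h : ∀ a : ZMod 2, a + a = 0 := by decide
    exact h d
  have hff : f * f ∈ ℛ 0 := hdd ▸ hRmul d d f f hf hf
  have key : ∀ j : ZMod 2, ∀ m ∈ ℳ j, (f * (f * (p * (f * f)))) • m = 0 := by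
    intro j m hm
    by_cases hji : j = i
    · subst hji
      have h1 : f • m = 0 := hkill m hm
      simp [mul_smul, h1]
    · have hji' : j = i + 1 := by
        have h : ∀ a b : ZMod 2, a ≠ b → a = b + 1 := by decide
        exact h j i hji
      subst hji'
      have hn : (f * f) • m ∈ ℳ (i + 1) := by
        have := hsmul 0 (i + 1) (f * f) m hff hm
        simpa using this
      have hpn : p • ((f * f) • m) ∈ ℳ i := by
        have := hsmul 1 (i + 1) p _ hp hn
        have h2 : (1 : ZMod 2) + (i + 1) = i := by
          have h : ∀ a : ZMod 2, (1 : ZMod 2) + (a + 1) = a := by decide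
          exact h i
        rwa [h2] at this
      have h3 : f • (p • ((f * f) • m)) = 0 := hkill _ hpn
      simp only [mul_smul] at h3 ⊢
      rw [h3, smul_zero]
  have hzero : f * (f * (p * (f * f))) = 0 := by
    apply hfaith
    intro m
    obtain ⟨m₀, hm₀, m₁, hm₁, rfl⟩ := hMsum m
    rw [smul_add, key 0 m₀ hm₀, key 1 m₁ hm₁, add_zero]
  rcases mul_eq_zero.mp hzero with h | h
  · exact h
  rcases mul_eq_zero.mp h with h | h
  · exact h
  rcases mul_eq_zero.mp h with h | h
  · exact absurd h hpne
  rcases mul_eq_zero.mp h with h | h <;> exact h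
end
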